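/- Let f : Φ → Ψ be a natural transformation between 2-functors Φ, Ψ : D → Cat. If precomposition with f reflects invertible identity modifications (i.e., for any modification β which is an isomorphism, βf an identity implies β an identity), then f is pointwise surjective on objects. -/

import Mathlib

open CategoryTheory

universe u

variable {D : Type u} [SmallCategory D]

/-- Naturality of a transformation between `Cat`-valued functors, expressed as an
equality of functors. -/
theorem natEq {Ψ Υ : D ⥤ Cat.{u, u}} (g : Ψ ⟶ Υ) {d d' : D} (u : d ⟶ d') :
    ((Ψ.map u).toFunctor : ↥(Ψ.obj d) ⥤ ↥(Ψ.obj d')) ⋙ ((g.app d').toFunctor : ↥(Ψ.obj d') ⥤ ↥(Υ.obj d')) =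
      ((g.app d).toFunctor : ↥(Ψ.obj d) ⥤ ↥(Υ.obj d)) ⋙ ((Υ.map u).toFunctor : ↥(Υ.obj d) ⥤ ↥(Υ.obj d')) :=
  congrArg Cat.Hom.toFunctor (g.naturality u)

/-- A modification between (strictly) 2-natural transformations `g, h : Ψ ⟶ Υ` of
`Cat`-valued functors. -/
structure Modification {Ψ Υ : D ⥤ Cat.{u, u}} (g h : Ψ ⟶ Υ) where
  app : ∀ d : D,
    ((g.app d).toFunctor : ↥(Ψ.obj d) ⥤ ↥(Υ.obj d)) ⟶ ((h.app d).toFunctor : ↥(Ψ.obj d) ⥤ ↥(Υ.obj d))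
  naturality : ∀ {d d' : D} (u : d ⟶ d'),
    CategoryTheory.Functor.whiskerLeft ((Ψ.map u).toFunctor : ↥(Ψ.obj d) ⥤ ↥(Ψ.obj d')) (app d') ≫
        eqToHom (natEq h u) =
      eqToHom (natEq g u) ≫
        CategoryTheory.Functor.whiskerRight (app d) ((Υ.map u).toFunctor : ↥(Υ.obj d) ⥤ ↥(Υ.obj d'))

/-- A morphism "is an identity" if its source and target are equal and it is the
corresponding `eqToHom`. -/
def IsIdentity {C : Type*} [Category C] {X Y : C} (φ : X ⟶ Y) : Prop :=
  ∃ e : X = Y, φ = eqToHom e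

namespace SurjAux

variable (Φ Ψ : D ⥤ Cat.{u, u}) (f : Φ ⟶ Ψ)

/-- `z` is in the image of `f.app d` on objects. -/
def InIm (d : D) (z : ↥(Ψ.obj d)) : Prop := ∃ x : ↥(Φ.obj d), (f.app d).toFunctor.obj x = z

open Classical in
/-- Boolean flag: `true` iff `z` is NOT in the image. -/
noncomputable def pb (d : D) (z : ↥(Ψ.obj d)) : Bool := decide (¬ InIm Φ Ψ f d z)

lemma pb_eq_false {d : D} {z : ↥(Ψ.obj d)} (h : InIm Φ Ψ f d z) : pb Φ Ψ f d z = false := by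
  classical
  simp [pb, h]

lemma inIm_of_pb_eq_false {d : D} {z : ↥(Ψ.obj d)} (h : pb Φ Ψ f d z = false) :
    InIm Φ Ψ f d z := by
  classical
  simpa [pb] using h

lemma inIm_map {d d' : D} (u : d ⟶ d') {z : ↥(Ψ.obj d)} (h : InIm Φ Ψ f d z) :
    InIm Φ Ψ f d' ((Ψ.map u).toFunctor.obj z) := by
  obtain ⟨x, rfl⟩ := h
  refine ⟨(Φ.map u).toFunctor.obj x, ?_⟩
  exact Functor.congr_obj (natEq f u) x

lemma pb_and {d d' : D} (u : d ⟶ d') (z : ↥(Ψ.obj d)) :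
    (pb Φ Ψ f d z && pb Φ Ψ f d' ((Ψ.map u).toFunctor.obj z)) = pb Φ Ψ f d' ((Ψ.map u).toFunctor.obj z) := by
  cases hz : pb Φ Ψ f d z with
  | true => simp
  | false =>
    have := pb_eq_false Φ Ψ f (inIm_map Φ Ψ f u (inIm_of_pb_eq_false Φ Ψ f hz))
    simp [this]

/-- Objects of the blown-up category: an object of `Ψ.obj d` together with a boolean
which can only be `true` for objects not in the image of `f`. -/
abbrev Ob (d : D) : Type u :=
  {zb : ↥(Ψ.obj d) × Bool // zb.2 = true → pb Φ Ψ f d zb.1 = true}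

instance (d : D) : Category.{u} (Ob Φ Ψ f d) where
  Hom a a' := a.1.1 ⟶ a'.1.1
  id a := 𝟙 a.1.1
  comp w w' := w ≫ w'
  id_comp w := Category.id_comp w
  comp_id w := Category.comp_id w
  assoc w w' w'' := Category.assoc w w' w''

lemma Ob.eqToHom_eq {d : D} {a a' : Ob Φ Ψ f d} (e : a = a') :
    (eqToHom e : a ⟶ a') = eqToHom (show a.1.1 = a'.1.1 from by rw [e]) := by
  cases e; rfl

/-- The action of `u : d ⟶ d'` on the blown-up categories. -/
noncomputable def Υmap {d d' : D} (u : d ⟶ d') : Ob Φ Ψ f d ⥤ Ob Φ Ψ f d' where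
  obj a := ⟨⟨(Ψ.map u).toFunctor.obj a.1.1, a.1.2 && pb Φ Ψ f d' ((Ψ.map u).toFunctor.obj a.1.1)⟩,
    fun hb => (Bool.and_eq_true _ _ |>.mp hb).2⟩
  map w := (Ψ.map u).toFunctor.map w
  map_id a := (Ψ.map u).toFunctor.map_id a.1.1
  map_comp w w' := (Ψ.map u).toFunctor.map_comp w w'

lemma Ob.ext' {d : D} {a a' : Ob Φ Ψ f d} (h1 : a.1.1 = a'.1.1) (h2 : a.1.2 = a'.1.2) :
    a = a' := by
  apply Subtype.ext
  exact Prod.ext h1 h2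

lemma Υmap_id (d : D) : Υmap Φ Ψ f (𝟙 d) = 𝟭 (Ob Φ Ψ f d) := by
  apply CategoryTheory.Functor.ext
  · intro a a' w
    have hc := Functor.congr_hom (congrArg Cat.Hom.toFunctor (Ψ.map_id d)) w
    rw [Ob.eqToHom_eq, Ob.eqToHom_eq]
    simp only [Υmap]
    simp [Cat.Hom.id_map] at hc ⊢
    exact hc
  · intro a
    apply Ob.ext'
    · exact Functor.congr_obj (congrArg Cat.Hom.toFunctor (Ψ.map_id d)) a.1.1
    · cases hb : a.1.2 with
      | false => simp [Υmap, hb]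
      | true =>
        have h1 := a.2 hb
        have h2 : pb Φ Ψ f d ((Ψ.map (𝟙 d)).toFunctor.obj a.1.1) = true := by
          rw [Functor.congr_obj (congrArg Cat.Hom.toFunctor (Ψ.map_id d)) a.1.1]; exact h1
        simp [Υmap, hb, h2, h1]

lemma Υmap_comp {d d' d'' : D} (u : d ⟶ d') (v : d' ⟶ d'') :
    Υmap Φ Ψ f (u ≫ v) = Υmap Φ Ψ f u ⋙ Υmap Φ Ψ f v := by
  apply CategoryTheory.Functor.ext
  · intro a a' w
    have hc := Functor.congr_hom (congrArg Cat.Hom.toFunctor (Ψ.map_comp u v)) w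
    rw [Ob.eqToHom_eq, Ob.eqToHom_eq]
    simp only [Υmap]
    simp [Cat.Hom.comp_map] at hc ⊢
    exact hc
  · intro a
    apply Ob.ext'
    · exact Functor.congr_obj (congrArg Cat.Hom.toFunctor (Ψ.map_comp u v)) a.1.1
    · have e := Functor.congr_obj (congrArg Cat.Hom.toFunctor (Ψ.map_comp u v)) a.1.1
      simp only [Υmap, Functor.comp_obj]
      rw [e]
      rw [Bool.and_assoc, pb_and Φ Ψ f v ((Ψ.map u).toFunctor.obj a.1.1)]
      rfl

/-- The target 2-functor `Υ`. -/
noncomputable def Υ : D ⥤ Cat.{u, u} where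
  obj d := Cat.of (Ob Φ Ψ f d)
  map u := (Υmap Φ Ψ f u).toCatHom
  map_id d := Cat.ext (Υmap_id Φ Ψ f d)
  map_comp u v := Cat.ext (Υmap_comp Φ Ψ f u v)

@[simp] lemma Ob.id_eq {d : D} (a : Ob Φ Ψ f d) : (𝟙 a : a ⟶ a) = 𝟙 a.1.1 := rfl

@[simp] lemma Ob.comp_eq {d : D} {a b c : Ob Φ Ψ f d} (w : a ⟶ b) (w' : b ⟶ c) :
    (w ≫ w' : a ⟶ c) = (show a.1.1 ⟶ b.1.1 from w) ≫ (show b.1.1 ⟶ c.1.1 from w') := rfl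

/-- First leg: include at `false`. -/
noncomputable def gApp (d : D) : ↥(Ψ.obj d) ⥤ Ob Φ Ψ f d where
  obj z := ⟨⟨z, false⟩, by simp⟩
  map w := w
  map_id z := rfl
  map_comp w w' := rfl

/-- Second leg: include at `pb`. -/
noncomputable def hApp (d : D) : ↥(Ψ.obj d) ⥤ Ob Φ Ψ f d where
  obj z := ⟨⟨z, pb Φ Ψ f d z⟩, fun hz => hz⟩
  map w := w
  map_id z := rfl
  map_comp w w' := rfl

noncomputable def gTrans : Ψ ⟶ Υ Φ Ψ f where
  app d := (gApp Φ Ψ f d).toCatHom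
  naturality {d d'} u := by
    apply Cat.ext
    change (Ψ.map u).toFunctor ⋙ gApp Φ Ψ f d' = gApp Φ Ψ f d ⋙ Υmap Φ Ψ f u
    apply CategoryTheory.Functor.ext
    · intro z z' w
      rw [Ob.eqToHom_eq, Ob.eqToHom_eq]
      simp [gApp, Υmap, Υ]
      exact (Category.id_comp _).symm
    · intro z
      apply Ob.ext' <;> simp [gApp, Υmap, Υ]

noncomputable def hTrans : Ψ ⟶ Υ Φ Ψ f where
  app d := (hApp Φ Ψ f d).toCatHom
  naturality {d d'} u := by
    apply Cat.ext
    change (Ψ.map u).toFunctor ⋙ hApp Φ Ψ f d' = hApp Φ Ψ f d ⋙ Υmap Φ Ψ f u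
    apply CategoryTheory.Functor.ext
    · intro z z' w
      rw [Ob.eqToHom_eq, Ob.eqToHom_eq]
      simp [hApp, Υmap, Υ]
      exact (Category.id_comp _).symm
    · intro z
      apply Ob.ext'
      · simp [hApp, Υmap, Υ]
      · simp [hApp, Υmap, Υ, pb_and Φ Ψ f u z]

noncomputable def βApp (d : D) : gApp Φ Ψ f d ⟶ hApp Φ Ψ f d where
  app z := (𝟙 z : (gApp Φ Ψ f d).obj z ⟶ (hApp Φ Ψ f d).obj z)
  naturality z z' w := by
    show ((gApp Φ Ψ f d).map w ≫ _ : z ⟶ z') = (_ ≫ (hApp Φ Ψ f d).map w : z ⟶ z')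
    simp [gApp, hApp]

lemma βApp_isIso (d : D) : IsIso (βApp Φ Ψ f d) := by
  have : ∀ z, IsIso ((βApp Φ Ψ f d).app z) := by
    intro z
    refine ⟨(𝟙 z : (hApp Φ Ψ f d).obj z ⟶ (gApp Φ Ψ f d).obj z), ?_, ?_⟩
    · show (𝟙 z ≫ 𝟙 z : z ⟶ z) = 𝟙 z
      simp
    · show (𝟙 z ≫ 𝟙 z : z ⟶ z) = 𝟙 z
      simp
  exact NatIso.isIso_of_isIso_app _


lemma eqToHom_self {C : Type*} [Category C] {a : C} (e : a = a) : eqToHom e = 𝟙 a := rfl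

noncomputable def βMod : Modification (gTrans Φ Ψ f) (hTrans Φ Ψ f) where
  app d := βApp Φ Ψ f d
  naturality {d d'} u := by
    ext z
    change (βApp Φ Ψ f d').app ((Ψ.map u).toFunctor.obj z) ≫ _ = _ ≫ (Υmap Φ Ψ f u).map ((βApp Φ Ψ f d).app z)
    simp only [NatTrans.comp_app, Functor.whiskerLeft_app, Functor.whiskerRight_app, eqToHom_app]
    erw [Ob.eqToHom_eq, Ob.eqToHom_eq]
    simp only [βApp, Υmap, gApp, hApp, Υ, eqToHom_self, Ob.comp_eq]
    simp
    · exact (Category.id_comp _).trans (Category.comp_id _).symm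
    · exact Functor.congr_obj (natEq (hTrans Φ Ψ f) u) z

end SurjAux

/-- If precomposition with `f : Φ ⟶ Ψ` reflects identities among
*invertible* modifications (for every modification `β` all of whose components are
isomorphisms, `β f` an identity implies `β` an identity), then `f` is pointwise
surjective on objects. -/
theorem reflects_iso_identity_modifications_implies_pointwise_surjective
    (Φ Ψ : D ⥤ Cat.{u, u}) (f : Φ ⟶ Ψ)
    (hrefl : ∀ (Υ : D ⥤ Cat.{u, u}) (g h : Ψ ⟶ Υ) (β : Modification g h),
      (∀ d : D, IsIso (β.app d)) →
      (∀ (d : D) (x : ↥(Φ.obj d)), IsIdentity ((β.app d).app ((f.app d).toFunctor.obj x))) →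
      (∀ (d : D) (y : ↥(Ψ.obj d)), IsIdentity ((β.app d).app y))) :
    ∀ d : D, Function.Surjective ((f.app d).toFunctor : ↥(Φ.obj d) ⥤ ↥(Ψ.obj d)).obj := by
  intro d y
  have him : ∀ (d : D) (x : ↥(Φ.obj d)),
      IsIdentity (((SurjAux.βMod Φ Ψ f).app d).app ((f.app d).toFunctor.obj x)) := by
    intro d x
    have hin : SurjAux.InIm Φ Ψ f d ((f.app d).toFunctor.obj x) := ⟨x, rfl⟩
    have hfalse := SurjAux.pb_eq_false Φ Ψ f hin
    have he : (SurjAux.gApp Φ Ψ f d).obj ((f.app d).toFunctor.obj x)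
        = (SurjAux.hApp Φ Ψ f d).obj ((f.app d).toFunctor.obj x) := by
      apply SurjAux.Ob.ext'
      · rfl
      · simp [SurjAux.gApp, SurjAux.hApp, hfalse]
    refine ⟨he, ?_⟩
    erw [SurjAux.Ob.eqToHom_eq]
    rfl
  have hiso : ∀ d : D, IsIso ((SurjAux.βMod Φ Ψ f).app d) :=
    fun d => SurjAux.βApp_isIso Φ Ψ f d
  obtain ⟨e, -⟩ := hrefl _ _ _ (SurjAux.βMod Φ Ψ f) hiso him d y
  have hb : (false : Bool) = SurjAux.pb Φ Ψ f d y :=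
    congrArg (fun a => (Subtype.val a).2) e
  exact SurjAux.inIm_of_pb_eq_false Φ Ψ f hb.symm
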